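/- arXiv:1605.05425 — 4 statements merged into one kernel-verified Lean document; each statement's English description precedes it below -/
import Mathlib

section
/- Let R be a commutative ring that is an algebra over ℚ, let g ≥ 0 be an integer, and let x_1, …, x_{2g+3} be elements of R. Suppose that for every tuple of integers (a_1, …, a_{2g+3}) with a_1 + ⋯ + a_{2g+3} = 0 one has (∑_{i=1}^{2g+3} a_i² x_i)^{g+1} = 0 in R. Then for every tuple of nonnegative integers (k_1, …, k_{2g+3}) with k_1 + ⋯ + k_{2g+3} = g + 1, the monomial x_1^{k_1} ⋯ x_{2g+3}^{k_{2g+3}} equals 0 in R. -/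
open MvPolynomial in
theorem key_indep (g : ℕ) (T : Finset (Fin (2 * g + 2 + 1) → ℕ))
    (hT : ∀ t ∈ T, t 0 ≤ g + 1)
    (c : (Fin (2 * g + 2 + 1) → ℕ) → ℚ)
    (hq : ∀ q : Fin (2 * g + 2) → ℚ,
      ∑ t ∈ T, c t * ((-∑ i, q i) ^ (2 * t 0) * ∏ i, q i ^ (2 * t i.succ)) = 0) :
    ∀ t ∈ T, c t = 0 := by
  classical
  set s : MvPolynomial (Fin (2 * g + 2)) ℚ := ∑ i, X i with hs
  set cf : (Fin (2 * g + 2 + 1) → ℕ) → MvPolynomial (Fin (2 * g + 2)) ℚ :=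
    fun t => C (c t) * ∏ i, X i ^ (2 * t i.succ) with hcf
  set V : MvPolynomial (Fin (2 * g + 2)) ℚ → MvPolynomial (Fin (2 * g + 2)) ℚ :=
    fun r => ∑ t ∈ T, cf t * r ^ (2 * t 0) with hV
  -- V(-s) = 0 by funext from hq
  have hVnegs : V (-s) = 0 := by
    apply MvPolynomial.funext
    intro z
    simp only [hV, hcf, hs, map_sum, map_mul, map_pow, eval_C, map_prod, eval_X, map_neg,
      map_zero]
    rw [← hq z]
    exact Finset.sum_congr rfl fun t _ => by ring
  -- sign-flip invariance
  have main_inv : ∀ ε : Fin (2 * g + 2) → ℚ, (∀ i, ε i = 1 ∨ ε i = -1) →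
      V (-∑ i, C (ε i) * X i) = 0 := by
    intro ε hε
    have h0 := congrArg (aeval (R := ℚ) (fun i => C (ε i) * X i)) hVnegs
    rw [map_zero] at h0
    rw [← h0]
    simp only [hV, hcf, hs, map_sum, map_mul, map_pow, map_prod, map_neg, aeval_X, aeval_C,
      MvPolynomial.algebraMap_eq]
    refine Finset.sum_congr rfl fun t _ => ?_
    congr 2
    refine Finset.prod_congr rfl fun i _ => ?_
    rw [mul_pow, ← map_pow]
    have : ε i ^ (2 * t i.succ) = 1 := by
      rcases hε i with h | h <;> rw [h] <;> simp [pow_mul]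
    rw [this, map_one, one_mul]
  have root1 : V s = 0 := by
    have := main_inv (fun _ => -1) (fun _ => Or.inr rfl)
    simpa [hs] using this
  have root2 : ∀ i0 : Fin (2 * g + 2), V (2 * X i0 - s) = 0 := by
    intro i0
    have heps : ∀ i : Fin (2 * g + 2), (fun i => if i = i0 then (-1 : ℚ) else 1) i = 1 ∨
        (fun i => if i = i0 then (-1 : ℚ) else 1) i = -1 := by
      intro i; by_cases h : i = i0 <;> simp [h]
    have h2 := main_inv _ heps
    have hsum : (∑ i, C (if i = i0 then (-1 : ℚ) else 1) * X i) = s - 2 * X i0 := by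
      have he : ∀ i : Fin (2 * g + 2), C (if i = i0 then (-1 : ℚ) else 1) * X i
          = X i - (if i = i0 then 2 * X i0 else 0) := by
        intro i
        by_cases h : i = i0
        · simp [h]; ring
        · simp [h]
      rw [Finset.sum_congr rfl fun i _ => he i, Finset.sum_sub_distrib,
        Finset.sum_ite_eq' Finset.univ i0 (fun _ => 2 * X i0)]
      simp [hs]
    rw [hsum] at h2
    have hr : -(s - 2 * X i0) = 2 * X i0 - s := by ring
    rwa [hr] at h2
  -- the polynomial G
  set G : Polynomial (MvPolynomial (Fin (2 * g + 2)) ℚ) :=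
    ∑ t ∈ T, Polynomial.C (cf t) * (Polynomial.X - Polynomial.C s) ^ (2 * t 0) with hG
  have evalG : ∀ r : MvPolynomial (Fin (2 * g + 2)) ℚ, Polynomial.eval r G = V (r - s) := by
    intro r
    simp [hG, hV, Polynomial.eval_finset_sum]
  have hsne : s ≠ 0 := by
    intro hcon
    have := congrArg (eval (fun _ => (1 : ℚ))) hcon
    rw [hs] at this
    simp at this
    have hg : (0:ℚ) ≤ (g:ℚ) := by positivity
    linarith
  have hsX : ∀ i : Fin (2 * g + 2), s ≠ X i := by
    intro i hcon
    have := congrArg (eval (fun j => if j = i then (0 : ℚ) else 1)) hcon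
    rw [hs] at this
    simp only [map_sum, eval_X] at this
    have hl : (∑ j : Fin (2 * g + 2), if j = i then (0 : ℚ) else 1) = 2 * g + 1 := by
      have he : ∀ j : Fin (2 * g + 2), (if j = i then (0 : ℚ) else 1)
          = 1 - (if j = i then 1 else 0) := by intro j; by_cases h : j = i <;> simp [h]
      rw [Finset.sum_congr rfl fun j _ => he j, Finset.sum_sub_distrib,
        Finset.sum_ite_eq' Finset.univ i (fun _ => (1 : ℚ))]
      simp
      push_cast
      ring
    rw [hl] at this
    simp at this
    have hg : (0:ℚ) ≤ (g:ℚ) := by positivity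
    linarith
  have hroots : ∀ r ∈ ({0, 2 * s} : Finset (MvPolynomial (Fin (2 * g + 2)) ℚ)) ∪
      Finset.univ.image (fun i => 2 * X i), Polynomial.eval r G = 0 := by
    intro r hr
    simp only [Finset.mem_union, Finset.mem_insert, Finset.mem_singleton, Finset.mem_image,
      Finset.mem_univ, true_and] at hr
    rcases hr with (rfl | rfl) | ⟨i, rfl⟩
    · rw [evalG]; simpa using hVnegs
    · rw [evalG]
      have h1 : (2 : MvPolynomial (Fin (2 * g + 2)) ℚ) * s - s = s := by ring
      rw [h1]; exact root1
    · rw [evalG]; exact root2 i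
  have hcard : Polynomial.natDegree G <
      (({0, 2 * s} : Finset (MvPolynomial (Fin (2 * g + 2)) ℚ)) ∪
        Finset.univ.image (fun i => 2 * X i)).card := by
    have hdeg : Polynomial.natDegree G ≤ 2 * (g + 1) := by
      apply Polynomial.natDegree_sum_le_of_forall_le
      intro t ht
      refine (Polynomial.natDegree_mul_le).trans ?_
      rw [Polynomial.natDegree_C]
      refine (Nat.zero_add _).trans_le ?_
      refine (Polynomial.natDegree_pow_le).trans ?_
      rw [Polynomial.natDegree_X_sub_C, mul_one]
      exact Nat.mul_le_mul_left 2 (hT t ht)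
    have hcardset : (({0, 2 * s} : Finset (MvPolynomial (Fin (2 * g + 2)) ℚ)) ∪
        Finset.univ.image (fun i => 2 * X i)).card = 2 * g + 4 := by
      rw [Finset.card_union_of_disjoint, Finset.card_image_of_injective, Finset.card_pair]
      · simp; omega
      · intro hcon
        rcases mul_eq_zero.mp hcon.symm with h2 | h2
        · exact two_ne_zero h2
        · exact hsne h2
      · intro i j hij
        have hx : X (R := ℚ) i = X j := by
          have h2 : (2 : MvPolynomial (Fin (2 * g + 2)) ℚ) ≠ 0 := two_ne_zero
          exact mul_left_cancel₀ h2 hij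
        exact MvPolynomial.X_injective hx
      · simp only [Finset.disjoint_left, Finset.mem_insert, Finset.mem_singleton,
          Finset.mem_image, Finset.mem_univ, true_and]
        rintro a (rfl | rfl) ⟨i, hi⟩
        · exact (mul_ne_zero two_ne_zero (MvPolynomial.X_ne_zero i)) hi
        · have hx : s = X i := by
            have h2 : (2 : MvPolynomial (Fin (2 * g + 2)) ℚ) ≠ 0 := two_ne_zero
            exact mul_left_cancel₀ h2 hi.symm
          exact hsX i hx
    rw [hcardset]; omega
  have hG0 : G = 0 :=
    Polynomial.eq_zero_of_natDegree_lt_card_of_eval_eq_zero' G _ hroots hcard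
  -- extract coefficients
  intro τ hτ
  have hθ := congrArg
    (Polynomial.aeval (R := MvPolynomial (Fin (2 * g + 2)) ℚ)
      (Polynomial.X + Polynomial.C s)) hG0
  rw [map_zero, hG] at hθ
  simp only [map_sum, map_mul, map_pow, map_sub, Polynomial.aeval_X, Polynomial.aeval_C,
    Polynomial.algebraMap_eq, add_sub_cancel_right] at hθ
  have hco := congrArg (fun P : Polynomial (MvPolynomial (Fin (2 * g + 2)) ℚ) =>
    MvPolynomial.coeff (Finsupp.equivFunOnFinite.symm fun i => 2 * τ i.succ)
      (Polynomial.coeff P (2 * τ 0))) hθ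
  simp only [Polynomial.finset_sum_coeff, Polynomial.coeff_C_mul, Polynomial.coeff_X_pow,
    MvPolynomial.coeff_sum, Polynomial.coeff_zero, map_zero, mul_ite, mul_one, mul_zero] at hco
  -- identify monomials
  have hmono : ∀ t : Fin (2 * g + 2 + 1) → ℕ,
      (∏ i, (X i : MvPolynomial (Fin (2 * g + 2)) ℚ) ^ (2 * t i.succ))
        = monomial (Finsupp.equivFunOnFinite.symm fun i => 2 * t i.succ) 1 := by
    intro t
    rw [← MvPolynomial.prod_X_pow_eq_monomial]
    refine (Finset.prod_subset (Finset.subset_univ _) ?_).symm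
    intro i _ hi
    simp only [Finsupp.mem_support_iff, ne_eq, not_not] at hi
    rw [show 2 * t i.succ = 0 from hi, pow_zero]
  have hterm : ∀ t ∈ T, t ≠ τ →
      MvPolynomial.coeff (Finsupp.equivFunOnFinite.symm fun i => 2 * τ i.succ)
        (if 2 * τ 0 = 2 * t 0 then cf t else 0) = 0 := by
    intro t _ htne
    by_cases h0 : 2 * τ 0 = 2 * t 0
    · rw [if_pos h0, hcf]
      simp only [hmono t]
      rw [MvPolynomial.coeff_C_mul, MvPolynomial.coeff_monomial]
      rw [if_neg, mul_zero]
      intro hcon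
      apply htne
      have hfun := congrArg (fun f => Finsupp.equivFunOnFinite f) hcon
      simp only [Equiv.apply_symm_apply] at hfun
      funext i
      refine Fin.cases ?_ ?_ i
      · omega
      · intro j
        have := congrFun hfun j
        omega
    · rw [if_neg h0]
      exact MvPolynomial.coeff_zero _
  have hτterm :
      MvPolynomial.coeff (Finsupp.equivFunOnFinite.symm fun i => 2 * τ i.succ)
        (if 2 * τ 0 = 2 * τ 0 then cf τ else 0) = c τ := by
    rw [if_pos rfl, hcf]
    simp only [hmono τ]
    rw [MvPolynomial.coeff_C_mul, MvPolynomial.coeff_monomial, if_pos rfl, mul_one]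
  rw [Finset.sum_eq_single τ (fun t ht htne => by
      have := hterm t ht htne
      simpa using this) (fun hcon => absurd hτ hcon)] at hco
  rw [← hτterm]
  simpa using hco

theorem theta_relations_imply_psi_monomial_vanishing
    (R : Type*) [CommRing R] [Algebra ℚ R] (g : ℕ)
    (x : Fin (2 * g + 3) → R)
    (h : ∀ a : Fin (2 * g + 3) → ℤ, (∑ i, a i) = 0 →
      (∑ i, (a i) ^ 2 • x i) ^ (g + 1) = 0) :
    ∀ k : Fin (2 * g + 3) → ℕ, (∑ i, k i) = g + 1 →
      (∏ i, x i ^ k i) = 0 := by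
  classical
  intro k hk
  set T : Finset (Fin (2 * g + 3) → ℕ) := Finset.piAntidiag Finset.univ (g + 1) with hT
  have hTle : ∀ t ∈ T, t 0 ≤ g + 1 := by
    intro t ht
    rw [hT, Finset.mem_piAntidiag] at ht
    calc t 0 ≤ ∑ i, t i := Finset.single_le_sum (fun i _ => Nat.zero_le _) (Finset.mem_univ 0)
    _ = g + 1 := ht.1
  have hkT : k ∈ T := by
    rw [hT, Finset.mem_piAntidiag]
    exact ⟨hk, fun i _ => Finset.mem_univ i⟩
  -- multinomial expansion
  have expand : ∀ a : Fin (2 * g + 3) → ℤ, (∑ i, (a i) ^ 2 • x i) ^ (g + 1)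
      = ∑ t ∈ T, (((Nat.multinomial Finset.univ t : ℤ) * ∏ i, (a i) ^ (2 * t i)) •
          ∏ i, x i ^ t i) := by
    intro a
    have e1 : (∑ i, (a i) ^ 2 • x i) = ∑ i, (((a i) ^ 2 : ℤ) : R) * x i :=
      Finset.sum_congr rfl fun i _ => zsmul_eq_mul _ _
    rw [e1, Finset.sum_pow_eq_sum_piAntidiag]
    refine Finset.sum_congr rfl fun t ht => ?_
    rw [zsmul_eq_mul]
    push_cast
    simp only [mul_pow, Finset.prod_mul_distrib, ← pow_mul]
    ring
  -- basis coordinates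
  set B := Module.Basis.ofVectorSpace ℚ R with hB
  suffices hcoord : ∀ β, B.coord β (∏ i, x i ^ k i) = 0 by
    have hrepr : B.repr (∏ i, x i ^ k i) = 0 := by
      ext β
      simpa [Module.Basis.coord_apply] using hcoord β
    exact (LinearEquiv.map_eq_zero_iff B.repr).mp hrepr
  intro β
  set ℓ : R →ₗ[ℚ] ℚ := B.coord β with hℓ
  set c : (Fin (2 * g + 3) → ℕ) → ℚ :=
    fun t => (Nat.multinomial Finset.univ t : ℚ) * ℓ (∏ i, x i ^ t i) with hc
  -- the integral-point relation
  have hz : ∀ a : Fin (2 * g + 3) → ℤ, (∑ i, a i) = 0 →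
      ∑ t ∈ T, c t * ∏ i, ((a i : ℚ)) ^ (2 * t i) = 0 := by
    intro a ha
    have e0 := h a ha
    rw [expand a] at e0
    have e1 := congrArg ℓ e0
    rw [map_zero, map_sum] at e1
    rw [← e1]
    refine Finset.sum_congr rfl fun t ht => ?_
    rw [map_zsmul, hc, zsmul_eq_mul]
    push_cast
    ring
  -- rational-point relation
  have hq : ∀ qv : Fin (2 * g + 2) → ℚ,
      ∑ t ∈ T, c t * ((-∑ i, qv i) ^ (2 * t 0) * ∏ i, qv i ^ (2 * t i.succ)) = 0 := by
    intro qv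
    set den : ℕ := ∏ i, (qv i).den with hden
    have hdenpos : 0 < den := Finset.prod_pos fun i _ => (qv i).pos
    set b : Fin (2 * g + 2) → ℤ := fun i => (qv i).num * ((den / (qv i).den : ℕ) : ℤ) with hb
    have hbq : ∀ i, (b i : ℚ) = den * qv i := by
      intro i
      have hdvd : (qv i).den ∣ den := Finset.dvd_prod_of_mem _ (Finset.mem_univ i)
      have hdne : ((qv i).den : ℚ) ≠ 0 := Nat.cast_ne_zero.mpr (qv i).den_nz
      have hcast : (((den / (qv i).den : ℕ)) : ℚ) = (den : ℚ) / ((qv i).den : ℚ) :=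
        Nat.cast_div hdvd hdne
      have hnum : ((qv i).num : ℚ) = qv i * ((qv i).den : ℚ) :=
        (div_eq_iff hdne).mp (Rat.num_div_den (qv i))
      rw [hb]
      simp only [Int.cast_mul, Int.cast_natCast]
      rw [hcast]
      field_simp
      rw [hnum]
      ring
    set a : Fin (2 * g + 3) → ℤ := (Fin.cons (α := fun _ => ℤ) (-(∑ i : Fin (2 * g + 2), b i)) b :
        Fin (2 * g + 2 + 1) → ℤ) with ha
    have hsum : ∑ i, a i = 0 := by
      rw [ha, Fin.sum_univ_succ]
      simp
    have hz2 := hz a hsum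
    have hprod : ∀ t ∈ T, (∏ i, ((a i : ℚ)) ^ (2 * t i))
        = (den : ℚ) ^ (2 * (g + 1)) *
          ((-∑ i, qv i) ^ (2 * t 0) * ∏ i, qv i ^ (2 * t i.succ)) := by
      intro t ht
      have hts : t 0 + ∑ i : Fin (2 * g + 2), t i.succ = g + 1 := by
        rw [hT, Finset.mem_piAntidiag] at ht
        rw [← ht.1]
        exact (Fin.sum_univ_succ t).symm
      have h0 : ((a 0 : ℤ) : ℚ) = (den : ℚ) * (-∑ i, qv i) := by
        rw [ha]
        simp only [Fin.cons_zero]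
        rw [Int.cast_neg, Int.cast_sum]
        rw [Finset.sum_congr rfl fun i _ => hbq i, ← Finset.mul_sum]
        ring
      have hsucc : ∀ i : Fin (2 * g + 2), ((a i.succ : ℤ) : ℚ) = (den : ℚ) * qv i := by
        intro i
        rw [ha]
        simp only [Fin.cons_succ]
        exact hbq i
      rw [Fin.prod_univ_succ]
      rw [h0]
      rw [Finset.prod_congr rfl fun i _ => by rw [hsucc i]]
      simp only [mul_pow, Finset.prod_mul_distrib]
      rw [Finset.prod_pow_eq_pow_sum]
      rw [show (den : ℚ) ^ (2 * t 0) * (-∑ i, qv i) ^ (2 * t 0) *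
            ((den : ℚ) ^ (∑ i : Fin (2 * g + 2), 2 * t i.succ) * ∏ i, qv i ^ (2 * t i.succ))
          = (den : ℚ) ^ (2 * t 0 + ∑ i : Fin (2 * g + 2), 2 * t i.succ) *
            ((-∑ i, qv i) ^ (2 * t 0) * ∏ i, qv i ^ (2 * t i.succ)) by
        rw [pow_add]; ring]
      congr 2
      rw [← Finset.mul_sum]
      omega
    have hD : ((den : ℚ) ^ (2 * (g + 1))) ≠ 0 :=
      pow_ne_zero _ (Nat.cast_ne_zero.mpr hdenpos.ne')
    have hfac : ∑ t ∈ T, c t * ∏ i, ((a i : ℚ)) ^ (2 * t i)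
        = (den : ℚ) ^ (2 * (g + 1)) *
          ∑ t ∈ T, c t * ((-∑ i, qv i) ^ (2 * t 0) * ∏ i, qv i ^ (2 * t i.succ)) := by
      rw [Finset.mul_sum]
      refine Finset.sum_congr rfl fun t ht => ?_
      rw [hprod t ht]
      ring
    rw [hfac] at hz2
    exact (mul_eq_zero.mp hz2).resolve_left hD
  have hck := key_indep g T hTle c hq k hkT
  rw [hc] at hck
  have hmult : ((Nat.multinomial Finset.univ k : ℚ)) ≠ 0 :=
    Nat.cast_ne_zero.mpr (Nat.multinomial_pos _ _).ne'
  have := (mul_eq_zero.mp hck).resolve_left hmult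
  simpa [hℓ, Module.Basis.coord_apply] using this
end

section
/- Let R be a commutative ring that is an algebra over ℚ, let g ≥ 0 and n ≥ 2g + 3 be integers, and let x_1, …, x_n be elements of R. Suppose that for every tuple of integers (a_1, …, a_n) with a_1 + ⋯ + a_n = 0 one has (∑_{i=1}^{n} a_i² x_i)^{g+1} = 0 in R. Then for every tuple of nonnegative integers (k_1, …, k_n) with k_1 + ⋯ + k_n ≥ g + 1, the monomial x_1^{k_1} ⋯ x_n^{k_n} equals 0 in R. -/
open Finset MvPolynomial

namespace ThetaPsiAux

/-! ### Auxiliary ℚ-polynomial definitions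

`Pk m k` is the image of the even monomial `∏ X i ^ (2 * k i)` in `m + 1` variables under the
substitution eliminating the variable `0` along the hyperplane "sum of all variables = 0". -/

noncomputable def Sform (m : ℕ) (ε : Fin m → ℚ) : MvPolynomial (Fin m) ℚ :=
  ∑ j, MvPolynomial.C (ε j) * MvPolynomial.X j

noncomputable def Pk (m : ℕ) (k : Fin (m+1) → ℕ) : MvPolynomial (Fin m) ℚ :=
  (∑ j, MvPolynomial.X j) ^ (2 * k 0) * ∏ j, MvPolynomial.X j ^ (2 * k j.succ)

noncomputable def Hpoly (m g : ℕ) (c : (Fin (m+1) → ℕ) → ℚ) (α : ℕ) :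
    MvPolynomial (Fin m) ℚ :=
  ∑ k ∈ (piAntidiag (univ : Finset (Fin (m+1))) (g+1)).filter (fun k => k 0 = α),
    c k • ∏ j, MvPolynomial.X j ^ (2 * k j.succ)

def eta (i : ℕ) : ℕ → ℚ := fun j => if j < i then -1 else 1

def etaF (m i : ℕ) : Fin m → ℚ := fun j => eta i (j : ℕ)

lemma etaF_sq (m i : ℕ) (j : Fin m) : etaF m i j ^ 2 = 1 := by
  unfold etaF eta; split <;> norm_num

lemma k_zero_mem_range {m g : ℕ} {k : Fin (m+1) → ℕ}
    (hk : k ∈ piAntidiag (univ : Finset (Fin (m+1))) (g+1)) : k 0 ∈ range (g+2) := by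
  rw [mem_piAntidiag] at hk
  have : k 0 ≤ g + 1 := hk.1 ▸ Finset.single_le_sum (f := k) (fun i _ => Nat.zero_le _)
    (mem_univ 0)
  exact mem_range.mpr (Nat.lt_succ_of_le this)

lemma step1 {m g : ℕ} (c : (Fin (m+1) → ℕ) → ℚ)
    (hc : ∑ k ∈ piAntidiag (univ : Finset (Fin (m+1))) (g+1), c k • Pk m k = 0) :
    ∑ α ∈ range (g+2), (∑ j, (MvPolynomial.X j : MvPolynomial (Fin m) ℚ)) ^ (2*α)
        * Hpoly m g c α = 0 := by
  have key : ∀ α ∈ range (g+2),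
      (∑ j, (MvPolynomial.X j : MvPolynomial (Fin m) ℚ)) ^ (2*α) * Hpoly m g c α
      = ∑ k ∈ (piAntidiag (univ : Finset (Fin (m+1))) (g+1)).filter (fun k => k 0 = α),
          c k • Pk m k := by
    intro α _
    rw [Hpoly, mul_sum]
    refine sum_congr rfl fun k hk => ?_
    obtain ⟨_, hk0⟩ := mem_filter.mp hk
    rw [mul_smul_comm, Pk, hk0]
  rw [sum_congr rfl key, sum_fiberwise_of_maps_to (fun k hk => k_zero_mem_range hk), hc]

lemma sign_fixes_even_prod {m : ℕ} (ε : Fin m → ℚ) (hε : ∀ j, ε j ^ 2 = 1)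
    (e : Fin m → ℕ) :
    (aeval (fun j => MvPolynomial.C (ε j) * MvPolynomial.X j))
      (∏ j, (MvPolynomial.X j : MvPolynomial (Fin m) ℚ) ^ (2 * e j))
      = ∏ j, (MvPolynomial.X j : MvPolynomial (Fin m) ℚ) ^ (2 * e j) := by
  rw [map_prod]
  refine Finset.prod_congr rfl fun j _ => ?_
  rw [map_pow, aeval_X, mul_pow, ← map_pow, pow_mul, hε j, one_pow, map_one, one_mul]

lemma step2 {m g : ℕ} (c : (Fin (m+1) → ℕ) → ℚ)
    (hc : ∑ k ∈ piAntidiag (univ : Finset (Fin (m+1))) (g+1), c k • Pk m k = 0)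
    (ε : Fin m → ℚ) (hε : ∀ j, ε j ^ 2 = 1) :
    ∑ α ∈ range (g+2), (Sform m ε) ^ (2*α) * Hpoly m g c α = 0 := by
  have h1 := step1 c hc
  have := congrArg (aeval (fun j => MvPolynomial.C (ε j) * MvPolynomial.X j)) h1
  rw [map_zero, map_sum] at this
  rw [← this]
  refine sum_congr rfl fun α _ => ?_
  rw [map_mul, map_pow, map_sum]
  congr 1
  · congr 1
    rw [Sform]
    exact Finset.sum_congr rfl fun j _ =>
      (aeval_X (fun j => MvPolynomial.C (ε j) * MvPolynomial.X j) j).symm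
  · rw [Hpoly, map_sum]
    refine sum_congr rfl fun k _ => ?_
    rw [map_smul, sign_fixes_even_prod ε hε]

/-- a ℚ-linear form with a nonzero coefficient is nonzero -/
lemma lin_ne_zero {m : ℕ} (d : Fin m → ℚ) (j0 : Fin m) (hd : d j0 ≠ 0) :
    (∑ j, MvPolynomial.C (d j) * MvPolynomial.X j : MvPolynomial (Fin m) ℚ) ≠ 0 := by
  intro h
  apply hd
  have := congrArg (MvPolynomial.coeff (Finsupp.single j0 1)) h
  rw [MvPolynomial.coeff_sum, MvPolynomial.coeff_zero] at this
  rw [← this]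
  rw [Finset.sum_eq_single j0]
  · rw [coeff_C_mul, coeff_X', if_pos rfl, mul_one]
  · intro b _ hb
    rw [coeff_C_mul, coeff_X', if_neg, mul_zero]
    intro hsingle
    exact hb (by
      have := Finsupp.single_left_injective (α := Fin m) (one_ne_zero (α := ℕ)) hsingle
      exact this)
  · intro h; exact absurd (mem_univ j0) h

lemma Sform_sub (m : ℕ) (ε ε' : Fin m → ℚ) :
    Sform m ε - Sform m ε' = ∑ j, MvPolynomial.C (ε j - ε' j) * MvPolynomial.X j := by
  rw [Sform, Sform, ← Finset.sum_sub_distrib]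
  exact Finset.sum_congr rfl fun j _ => by rw [map_sub, sub_mul]

lemma Sform_add (m : ℕ) (ε ε' : Fin m → ℚ) :
    Sform m ε + Sform m ε' = ∑ j, MvPolynomial.C (ε j + ε' j) * MvPolynomial.X j := by
  rw [Sform, Sform, ← Finset.sum_add_distrib]
  exact Finset.sum_congr rfl fun j _ => by rw [map_add, add_mul]

lemma sq_diff_ne_zero {m g : ℕ} (hm : g + 2 ≤ m) {i i' : ℕ}
    (hi : i ∈ range (g+2)) (hi' : i' ∈ range (g+2)) (hne : i ≠ i') :
    (Sform m (etaF m i)) ^ 2 - (Sform m (etaF m i')) ^ 2 ≠ 0 := by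
  rw [Commute.sq_sub_sq (Commute.all _ _)]
  have him : i ≤ m - 1 := by
    have := mem_range.mp hi; omega
  have hi'm : i' ≤ m - 1 := by
    have := mem_range.mp hi'; omega
  have hm1 : m - 1 < m := by omega
  apply mul_ne_zero
  · rw [Sform_add]
    refine lin_ne_zero _ ⟨m - 1, hm1⟩ ?_
    show eta i (m-1) + eta i' (m-1) ≠ 0
    unfold eta
    rw [if_neg (by omega : ¬ (m-1 < i)), if_neg (by omega : ¬ (m-1 < i'))]; norm_num
  · rw [Sform_sub]
    rcases Nat.lt_or_ge i i' with hlt | hge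
    · refine lin_ne_zero _ ⟨i, by omega⟩ ?_
      show eta i i - eta i' i ≠ 0
      unfold eta
      rw [if_neg (lt_irrefl i), if_pos hlt]; norm_num
    · have hlt : i' < i := by omega
      refine lin_ne_zero _ ⟨i', by omega⟩ ?_
      show eta i i' - eta i' i' ≠ 0
      unfold eta
      rw [if_pos hlt, if_neg (lt_irrefl i')]; norm_num

noncomputable def Wpoly (m g : ℕ) : MvPolynomial (Fin m) ℚ :=
  ∏ p ∈ (range (g+2)).offDiag,
    ((Sform m (etaF m p.1)) ^ 2 - (Sform m (etaF m p.2)) ^ 2)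

lemma Wpoly_ne_zero {m g : ℕ} (hm : g + 2 ≤ m) : Wpoly m g ≠ 0 := by
  rw [Wpoly]
  rw [Finset.prod_ne_zero_iff]
  intro p hp
  obtain ⟨h1, h2, h3⟩ := Finset.mem_offDiag.mp hp
  exact sq_diff_ne_zero hm h1 h2 h3

lemma Hvanish {m g : ℕ} (hm : g + 2 ≤ m) (c : (Fin (m+1) → ℕ) → ℚ)
    (hc : ∑ k ∈ piAntidiag (univ : Finset (Fin (m+1))) (g+1), c k • Pk m k = 0) :
    ∀ α ∈ range (g+2), Hpoly m g c α = 0 := by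
  have key : ∀ (v : Fin m → ℚ), ∀ α ∈ range (g+2),
      eval v (Hpoly m g c α * Wpoly m g) = 0 := by
    intro v α hα
    by_cases hvW : eval v (Wpoly m g) = 0
    · rw [map_mul, hvW, mul_zero]
    · -- all factors evaluate to something nonzero
      have hfac : ∀ p ∈ (range (g+2)).offDiag,
          eval v ((Sform m (etaF m p.1)) ^ 2 - (Sform m (etaF m p.2)) ^ 2) ≠ 0 := by
        intro p hp hzero
        apply hvW
        rw [Wpoly, map_prod]
        exact Finset.prod_eq_zero hp hzero
      have hui : Function.Injective
          (fun i : Fin (g+2) => (eval v (Sform m (etaF m (i : ℕ)))) ^ 2) := by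
        intro i i' hu
        by_contra hne
        have hmem : ((i : ℕ), (i' : ℕ)) ∈ (range (g+2)).offDiag :=
          Finset.mem_offDiag.mpr ⟨mem_range.mpr i.isLt, mem_range.mpr i'.isLt,
            fun hh => hne (Fin.ext hh)⟩
        apply hfac _ hmem
        rw [map_sub, map_pow, map_pow]
        simpa using sub_eq_zero_of_eq hu
      set q : Polynomial ℚ :=
        ∑ β ∈ range (g+2), Polynomial.C (eval v (Hpoly m g c β)) * Polynomial.X ^ β with hq
      have hdeg : q.natDegree < g + 2 := by
        apply Nat.lt_succ_of_le
        apply Polynomial.natDegree_sum_le_of_forall_le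
        intro β hβ
        calc (Polynomial.C (eval v (Hpoly m g c β)) * Polynomial.X ^ β).natDegree
            ≤ (Polynomial.X ^ β : Polynomial ℚ).natDegree := Polynomial.natDegree_C_mul_le _ _
          _ = β := Polynomial.natDegree_X_pow β
          _ ≤ g + 1 := by have := mem_range.mp hβ; omega
      have hroot : ∀ i : Fin (g+2),
          q.eval ((eval v (Sform m (etaF m (i : ℕ)))) ^ 2) = 0 := by
        intro i
        have h2 := step2 c hc (etaF m (i : ℕ)) (etaF_sq m (i : ℕ))
        have h3 := congrArg (eval v) h2
        rw [map_zero, map_sum] at h3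
        rw [← h3, hq, Polynomial.eval_finset_sum]
        refine sum_congr rfl fun β _ => ?_
        rw [Polynomial.eval_mul, Polynomial.eval_C, Polynomial.eval_pow, Polynomial.eval_X,
          map_mul, map_pow, pow_mul, mul_comm]
      have hq0 : q = 0 := by
        apply Polynomial.eq_zero_of_natDegree_lt_card_of_eval_eq_zero q hui hroot
        simpa using hdeg
      have hcoeff : eval v (Hpoly m g c α) = q.coeff α := by
        rw [hq, Polynomial.finset_sum_coeff]
        rw [Finset.sum_eq_single_of_mem α hα]
        · rw [Polynomial.coeff_C_mul, Polynomial.coeff_X_pow, if_pos rfl, mul_one]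
        · intro β _ hβne
          rw [Polynomial.coeff_C_mul, Polynomial.coeff_X_pow, if_neg (Ne.symm hβne), mul_zero]
      rw [map_mul, hcoeff, hq0, Polynomial.coeff_zero, zero_mul]
  intro α hα
  have hprod : Hpoly m g c α * Wpoly m g = 0 := by
    apply MvPolynomial.funext
    intro v
    rw [map_zero]
    exact key v α hα
  rcases mul_eq_zero.mp hprod with h | h
  · exact h
  · exact absurd h (Wpoly_ne_zero hm)

lemma prod_X_pow_univ {m : ℕ} (e : Fin m → ℕ) :
    (∏ j, (MvPolynomial.X j : MvPolynomial (Fin m) ℚ) ^ e j)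
      = monomial (Finsupp.equivFunOnFinite.symm e) 1 := by
  rw [← MvPolynomial.prod_X_pow_eq_monomial]
  rw [Finset.prod_subset (Finset.subset_univ (Finsupp.equivFunOnFinite.symm e).support)]
  · exact Finset.prod_congr rfl fun j _ => rfl
  · intro j _ hj
    have : (Finsupp.equivFunOnFinite.symm e) j = 0 := Finsupp.notMem_support_iff.mp hj
    have he : e j = 0 := this
    rw [show ((Finsupp.equivFunOnFinite.symm e) j : ℕ) = e j from rfl, he, pow_zero]

set_option maxHeartbeats 2000000 in
lemma indep_core {m g : ℕ} (hm : g + 2 ≤ m) (c : (Fin (m+1) → ℕ) → ℚ)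
    (hc : ∑ k ∈ piAntidiag (univ : Finset (Fin (m+1))) (g+1), c k • Pk m k = 0) :
    ∀ k ∈ piAntidiag (univ : Finset (Fin (m+1))) (g+1), c k = 0 := by
  intro k hk
  have hα := k_zero_mem_range hk
  have hH := Hvanish hm c hc (k 0) hα
  have hrepr : Hpoly m g c (k 0)
      = ∑ k' ∈ (piAntidiag (univ : Finset (Fin (m+1))) (g+1)).filter (fun k' => k' 0 = k 0),
          monomial (Finsupp.equivFunOnFinite.symm (fun j => 2 * k' j.succ)) (c k') := by
    rw [Hpoly]
    refine sum_congr rfl fun k' _ => ?_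
    rw [prod_X_pow_univ, MvPolynomial.smul_monomial, smul_eq_mul, mul_one]
  have hco := congrArg
    (MvPolynomial.coeff (Finsupp.equivFunOnFinite.symm (fun j => 2 * k j.succ))) hH
  rw [hrepr, MvPolynomial.coeff_sum, MvPolynomial.coeff_zero] at hco
  have hside : ∀ k' : Fin (m+1) → ℕ, k' ∈ (piAntidiag (univ : Finset (Fin (m+1))) (g+1)).filter
      (fun k' => k' 0 = k 0) → k' ≠ k →
      MvPolynomial.coeff (Finsupp.equivFunOnFinite.symm (fun j => 2 * k j.succ))
        (monomial (Finsupp.equivFunOnFinite.symm (fun j : Fin m => 2 * k' j.succ)) (c k')) = 0 := by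
    intro k' hk' hne
    rw [MvPolynomial.coeff_monomial, if_neg]
    intro heq
    apply hne
    have heq' := Finsupp.equivFunOnFinite.symm.injective heq
    have htail : ∀ j : Fin m, k' j.succ = k j.succ := by
      intro j
      have := congrFun heq' j
      omega
    have hzero : k' 0 = k 0 := (Finset.mem_filter.mp hk').2
    funext i
    induction i using Fin.cases with
    | zero => exact hzero
    | succ j => exact htail j
  have hmemk : k ∈ (piAntidiag (univ : Finset (Fin (m+1))) (g+1)).filter
      (fun k' => k' 0 = k 0) := Finset.mem_filter.mpr ⟨hk, rfl⟩
  have hsum := Finset.sum_eq_single_of_mem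
    (f := fun k' => MvPolynomial.coeff (Finsupp.equivFunOnFinite.symm (fun j => 2 * k j.succ))
      (monomial (Finsupp.equivFunOnFinite.symm (fun j : Fin m => 2 * k' j.succ)) (c k')))
    (s := (piAntidiag (univ : Finset (Fin (m+1))) (g+1)).filter (fun k' => k' 0 = k 0))
    k hmemk hside
  rw [hsum] at hco
  rwa [MvPolynomial.coeff_monomial, if_pos rfl] at hco

lemma hQ {R : Type*} [CommRing R] [Algebra ℚ R] {g n : ℕ} (x : Fin n → R)
    (h : ∀ a : Fin n → ℤ, (∑ i, a i) = 0 → (∑ i, (a i) ^ 2 • x i) ^ (g + 1) = 0)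
    (v : Fin n → ℚ) (hv : ∑ i, v i = 0) :
    (∑ i, (v i) ^ 2 • x i) ^ (g + 1) = 0 := by
  classical
  set N : ℚ := ∏ i, ((v i).den : ℚ) with hNdef
  have hN : N ≠ 0 := by
    rw [hNdef]
    exact Finset.prod_ne_zero_iff.mpr fun i _ =>
      Nat.cast_ne_zero.mpr (v i).den_nz
  set a : Fin n → ℤ := fun i => (v i).num * ∏ j ∈ univ.erase i, ((v j).den : ℤ) with ha
  have hcast : ∀ i, ((a i : ℤ) : ℚ) = v i * N := by
    intro i
    rw [ha]
    push_cast
    rw [hNdef, ← Finset.mul_prod_erase univ (fun j => ((v j).den : ℚ)) (mem_univ i)]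
    rw [← Rat.mul_den_eq_num, mul_assoc]
  have hsum : ∑ i, a i = 0 := by
    have : ((∑ i, a i : ℤ) : ℚ) = 0 := by
      push_cast
      rw [show ∑ i, ((a i : ℤ) : ℚ) = ∑ i, v i * N from Finset.sum_congr rfl fun i _ => hcast i,
        ← Finset.sum_mul, hv, zero_mul]
    exact_mod_cast this
  have hx := h a hsum
  have hterm : ∀ i, (a i) ^ 2 • x i = (N ^ 2) • ((v i) ^ 2 • x i) := by
    intro i
    rw [← Int.cast_smul_eq_zsmul ℚ ((a i) ^ 2) (x i)]
    push_cast
    rw [hcast i, smul_smul]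
    congr 1
    ring
  rw [Finset.sum_congr rfl fun i _ => hterm i, ← Finset.smul_sum, smul_pow] at hx
  have hscal : ((N ^ 2) ^ (g+1) : ℚ) ≠ 0 := pow_ne_zero _ (pow_ne_zero _ hN)
  calc (∑ i, (v i) ^ 2 • x i) ^ (g + 1)
      = ((N ^ 2) ^ (g+1))⁻¹ • ((N ^ 2) ^ (g+1) • (∑ i, (v i) ^ 2 • x i) ^ (g + 1)) :=
        (inv_smul_smul₀ hscal _).symm
    _ = ((N ^ 2) ^ (g+1))⁻¹ • (0 : R) := by rw [hx]
    _ = 0 := smul_zero _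

lemma eval_Pk {m : ℕ} (v : Fin m → ℚ) (k : Fin (m+1) → ℕ) :
    ∏ i, ((Fin.cons (-(∑ j, v j)) v : Fin (m+1) → ℚ) i ^ 2) ^ (k i)
      = eval v (Pk m k) := by
  rw [Fin.prod_univ_succ, Fin.cons_zero, Pk, map_mul, map_pow, map_sum, map_prod]
  congr 1
  · rw [neg_sq, ← pow_mul]
    congr 1
    simp
  · refine Finset.prod_congr rfl fun j _ => ?_
    rw [Fin.cons_succ, map_pow, eval_X, ← pow_mul]

theorem key_vanish {R : Type*} [CommRing R] [Algebra ℚ R] (g m : ℕ) (hm : g + 2 ≤ m)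
    (x : Fin (m+1) → R)
    (h : ∀ a : Fin (m+1) → ℤ, (∑ i, a i) = 0 → (∑ i, (a i) ^ 2 • x i) ^ (g + 1) = 0) :
    ∀ k ∈ piAntidiag (univ : Finset (Fin (m+1))) (g+1),
      (Nat.multinomial (univ : Finset (Fin (m+1))) k : ℚ) • ∏ i, x i ^ k i = 0 := by
  classical
  have pairing : ∀ v : Fin m → ℚ,
      ∑ k ∈ piAntidiag (univ : Finset (Fin (m+1))) (g+1),
        (eval v (Pk m k)) •
          ((Nat.multinomial (univ : Finset (Fin (m+1))) k : ℚ) • ∏ i, x i ^ k i) = 0 := by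
    intro v
    have hv' : ∑ i, (Fin.cons (-(∑ j, v j)) v : Fin (m+1) → ℚ) i = 0 := by
      rw [Fin.sum_univ_succ, Fin.cons_zero]
      simp
    have h0 := hQ x h _ hv'
    rw [Finset.sum_pow_eq_sum_piAntidiag] at h0
    rw [← h0]
    refine sum_congr rfl fun k _ => ?_
    have hprod : ∏ i, ((Fin.cons (-(∑ j, v j)) v : Fin (m+1) → ℚ) i ^ 2 • x i) ^ (k i)
        = algebraMap ℚ R
            (∏ i, ((Fin.cons (-(∑ j, v j)) v : Fin (m+1) → ℚ) i ^ 2) ^ (k i))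
          * ∏ i, x i ^ k i := by
      rw [map_prod, ← Finset.prod_mul_distrib]
      refine Finset.prod_congr rfl fun i _ => ?_
      simp only [Algebra.smul_def, mul_pow, map_pow]
    rw [hprod, eval_Pk, Algebra.smul_def, Algebra.smul_def, map_natCast]
    ring
  set b := Module.Basis.ofVectorSpace ℚ R with hb
  have hyw : ∀ w, ∀ k ∈ piAntidiag (univ : Finset (Fin (m+1))) (g+1),
      b.repr ((Nat.multinomial (univ : Finset (Fin (m+1))) k : ℚ) • ∏ i, x i ^ k i) w = 0 := by
    intro w
    apply indep_core hm
    apply MvPolynomial.funext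
    intro v
    rw [map_zero, map_sum]
    have hrepr := congrArg (fun r => b.repr r w) (pairing v)
    simp only [map_zero, Finsupp.coe_zero, Pi.zero_apply] at hrepr
    rw [map_sum] at hrepr
    rw [← hrepr]
    · simp only [Finsupp.finset_sum_apply]
      refine sum_congr rfl fun k _ => ?_
      simp only [smul_eval, map_smul, Finsupp.smul_apply, smul_eq_mul]
      ring
  intro k hk
  have : b.repr ((Nat.multinomial (univ : Finset (Fin (m+1))) k : ℚ) • ∏ i, x i ^ k i) = 0 :=
    Finsupp.ext fun w => hyw w k hk
  exact b.repr.map_eq_zero_iff.mp this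

lemma trim {n : ℕ} : ∀ (s t : ℕ) (k : Fin n → ℕ), ∑ i, k i = s → t ≤ s →
    ∃ k' : Fin n → ℕ, (∀ i, k' i ≤ k i) ∧ ∑ i, k' i = t := by
  intro s
  induction s with
  | zero =>
    intro t k hk ht
    exact ⟨k, fun i => le_rfl, by omega⟩
  | succ s ih =>
    intro t k hk ht
    rcases eq_or_lt_of_le ht with heq | hlt
    · exact ⟨k, fun i => le_rfl, by omega⟩
    · have hex : ∃ i, 0 < k i := by
        by_contra hno
        push_neg at hno
        have : ∑ i, k i = 0 := Finset.sum_eq_zero fun i _ => by have := hno i; omega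
        omega
      obtain ⟨i, hi⟩ := hex
      have hA : k i + ∑ j ∈ univ.erase i, k j = s + 1 := by
        rw [Finset.add_sum_erase _ k (mem_univ i)]; exact hk
      have hsum2 : ∑ j, Function.update k i (k i - 1) j = s := by
        rw [Finset.sum_update_of_mem (mem_univ i), Finset.sdiff_singleton_eq_erase]
        have : ∑ j ∈ univ.erase i, k j = s + 1 - k i := by omega
        rw [this]
        omega
      obtain ⟨k', hle, hsk⟩ := ih t (Function.update k i (k i - 1)) hsum2 (by omega)
      refine ⟨k', fun j => le_trans (hle j) ?_, hsk⟩
      rcases eq_or_ne j i with rfl | hne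
      · rw [Function.update_self]; omega
      · rw [Function.update_of_ne hne]

end ThetaPsiAux

open ThetaPsiAux in
theorem theta_relations_imply_psi_vanishing_general
    (R : Type*) [CommRing R] [Algebra ℚ R] (g n : ℕ) (hn : 2 * g + 3 ≤ n)
    (x : Fin n → R)
    (h : ∀ a : Fin n → ℤ, (∑ i, a i) = 0 →
      (∑ i, (a i) ^ 2 • x i) ^ (g + 1) = 0) :
    ∀ k : Fin n → ℕ, g + 1 ≤ (∑ i, k i) →
      (∏ i, x i ^ k i) = 0 := by
  obtain ⟨m, rfl⟩ : ∃ m, n = m + 1 := ⟨n - 1, by omega⟩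
  have hm : g + 2 ≤ m := by omega
  intro k hk
  obtain ⟨k', hle, hsum⟩ := trim (∑ i, k i) (g+1) k rfl hk
  have hk'mem : k' ∈ Finset.piAntidiag (Finset.univ : Finset (Fin (m+1))) (g+1) :=
    Finset.mem_piAntidiag.mpr ⟨hsum, fun i _ => Finset.mem_univ i⟩
  have hy := key_vanish g m hm x h k' hk'mem
  have hd : (Nat.multinomial (Finset.univ : Finset (Fin (m+1))) k' : ℚ) ≠ 0 :=
    Nat.cast_ne_zero.mpr (Nat.multinomial_pos _ _).ne'
  have hprod0 : ∏ i, x i ^ k' i = 0 := by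
    have h2 := congrArg
      (fun r : R => ((Nat.multinomial (Finset.univ : Finset (Fin (m+1))) k' : ℚ))⁻¹ • r) hy
    simpa [smul_smul, inv_mul_cancel₀ hd] using h2
  have hsplit : ∏ i, x i ^ k i = (∏ i, x i ^ k' i) * ∏ i, x i ^ (k i - k' i) := by
    rw [← Finset.prod_mul_distrib]
    refine Finset.prod_congr rfl fun i _ => ?_
    rw [← pow_add]
    congr 1
    have := hle i
    omega
  rw [hsplit, hprod0, zero_mul]
end

section
/- For a commutative ring R and elements x_1, …, x_{2g+2}, y ∈ R (g ≥ 0 an integer), consider the polynomial P = (∑_{i=1}^{2g+2} A_i² x_i + (A_1 + ⋯ + A_{2g+2})² y)^{g+1} in the polynomial ring R[A_1, …, A_{2g+2}]. Then the coefficient of the squarefree monomial A_1 A_2 ⋯ A_{2g+2} in P equals (2g+2)! · y^{g+1}. -/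
open MvPolynomial Finset

lemma coeff_prod_X_pow_aux {R : Type*} [CommRing R] {σ : Type*} [Fintype σ] [DecidableEq σ]
    (m : σ →₀ ℕ) (k : σ → ℕ) :
    MvPolynomial.coeff m (∏ i : σ, (MvPolynomial.X i : MvPolynomial σ R) ^ k i) =
      if Finsupp.equivFunOnFinite.symm k = m then 1 else 0 := by
  have h : (∏ i : σ, (MvPolynomial.X i : MvPolynomial σ R) ^ k i) =
      MvPolynomial.monomial (Finsupp.equivFunOnFinite.symm k) 1 := by
    rw [← MvPolynomial.prod_X_pow_eq_monomial]
    refine (Finset.prod_subset (Finset.subset_univ _) ?_).symm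
    intro i _ hi
    have : (Finsupp.equivFunOnFinite.symm k) i = 0 := by
      simpa [Finsupp.mem_support_iff] using hi
    simp_all
  rw [h, MvPolynomial.coeff_monomial]

lemma coeff_sum_X_pow_card {R : Type*} [CommRing R] {σ : Type*} [Fintype σ] [DecidableEq σ]
    : MvPolynomial.coeff (Finsupp.equivFunOnFinite.symm fun _ : σ => 1)
      ((∑ i : σ, (MvPolynomial.X i : MvPolynomial σ R)) ^ Fintype.card σ)
      = (Fintype.card σ).factorial := by
  rw [Finset.sum_pow_eq_sum_piAntidiag, MvPolynomial.coeff_sum]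
  have hmem : (fun _ : σ => 1) ∈ Finset.piAntidiag Finset.univ (Fintype.card σ) := by
    simp [Finset.mem_piAntidiag, Finset.card_univ]
  rw [Finset.sum_eq_single (fun _ : σ => 1)]
  · have hmn : Nat.multinomial Finset.univ (fun _ : σ => 1) = (Fintype.card σ).factorial := by
      have := Nat.multinomial_spec Finset.univ (fun _ : σ => 1)
      simpa [Finset.card_univ] using this
    have hc : (↑(Nat.multinomial Finset.univ (fun _ : σ => 1)) : MvPolynomial σ R) *
        ∏ i : σ, MvPolynomial.X i ^ (fun _ : σ => 1) i
        = (Nat.multinomial Finset.univ (fun _ : σ => 1)) •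
          ∏ i : σ, MvPolynomial.X i ^ (fun _ : σ => 1) i := by
      simp [nsmul_eq_mul]
    rw [hc, MvPolynomial.coeff_smul, coeff_prod_X_pow_aux, if_pos rfl, hmn]
    simp
  · intro k hk hne
    have : (↑(Nat.multinomial Finset.univ k) : MvPolynomial σ R) * ∏ i : σ, MvPolynomial.X i ^ k i
        = (Nat.multinomial Finset.univ k) • ∏ i : σ, MvPolynomial.X i ^ k i := by
      simp [nsmul_eq_mul]
    rw [this, MvPolynomial.coeff_smul, coeff_prod_X_pow_aux]
    rw [if_neg, smul_zero]
    intro h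
    apply hne
    funext i
    have := congrArg (fun f => Finsupp.equivFunOnFinite f i) h
    simpa using this
  · intro h; exact absurd hmem h

theorem squarefree_coefficient_of_theta_power
    (R : Type*) [CommRing R] (g : ℕ)
    (x : Fin (2 * g + 2) → R) (y : R) :
    MvPolynomial.coeff
      (Finsupp.equivFunOnFinite.symm fun _ : Fin (2 * g + 2) => 1)
      ((∑ i, (MvPolynomial.X i) ^ 2 * MvPolynomial.C (x i) +
        (∑ i, MvPolynomial.X i) ^ 2 * MvPolynomial.C y) ^ (g + 1))
      = (2 * g + 2).factorial • y ^ (g + 1) := by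
  classical
  set m : Fin (2 * g + 2) →₀ ℕ := Finsupp.equivFunOnFinite.symm fun _ => 1 with hm
  set a : MvPolynomial (Fin (2 * g + 2)) R :=
    ∑ i, MvPolynomial.X i ^ 2 * MvPolynomial.C (x i) with ha
  set b : MvPolynomial (Fin (2 * g + 2)) R :=
    (∑ i, MvPolynomial.X i) ^ 2 * MvPolynomial.C y with hb
  obtain ⟨c, hc⟩ := sub_dvd_pow_sub_pow (a + b) b (g + 1)
  have hab : (a + b) ^ (g + 1) = a * c + b ^ (g + 1) := by
    have h' : a + b - b = a := by ring
    rw [h'] at hc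
    linear_combination hc
  rw [hab, MvPolynomial.coeff_add]
  have h1 : MvPolynomial.coeff m (a * c) = 0 := by
    rw [ha, Finset.sum_mul, MvPolynomial.coeff_sum]
    refine Finset.sum_eq_zero fun i _ => ?_
    have hmono : (MvPolynomial.X i ^ 2 * MvPolynomial.C (x i)) * c =
        MvPolynomial.monomial (Finsupp.single i 2) (x i) * c := by
      rw [mul_comm (MvPolynomial.X i ^ 2) (MvPolynomial.C (x i)),
        MvPolynomial.C_mul_X_pow_eq_monomial]
    rw [hmono, MvPolynomial.coeff_monomial_mul', if_neg]
    rw [Finsupp.single_le_iff, hm]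
    simp
  rw [h1, zero_add]
  have h2 : b ^ (g + 1) = (∑ i, MvPolynomial.X i) ^ (2 * g + 2) *
      MvPolynomial.C (y ^ (g + 1)) := by
    rw [hb, mul_pow, ← pow_mul, MvPolynomial.C_pow]
    ring_nf
  rw [h2, mul_comm ((∑ i, MvPolynomial.X i : MvPolynomial (Fin (2*g+2)) R) ^ (2 * g + 2)) _, MvPolynomial.coeff_C_mul]
  have h3 := coeff_sum_X_pow_card (R := R) (σ := Fin (2 * g + 2))
  rw [Fintype.card_fin] at h3
  rw [hm, h3, nsmul_eq_mul]
  ring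
end

section
/- Let R be a commutative ring, let g ≥ 0 and k be integers with 1 ≤ k ≤ g + 1, and let x_1, …, x_{2g+2}, y ∈ R. Let k_1, …, k_{2g+2} be nonnegative integers with k_1 + ⋯ + k_{2g+2} = g + 1 − (k − 1), let I = {i : k_i = 0}, let j be the 2(k−1)-st smallest element of I (which exists since #I ≥ 2(k−1)), and define m_i = 2k_i if k_i > 0, m_i = 1 if k_i = 0 and i ≤ j, and m_i = 0 if k_i = 0 and i > j. Consider the polynomial P = (∑_{i=1}^{2g+2} A_i² x_i + (A_1 + ⋯ + A_{2g+2})² y)^{g+1} in the polynomial ring R[A_1, …, A_{2g+2}]. Then there exists a positive integer C (independent of R, x, y) such that the coefficient of A_1^{m_1} ⋯ A_{2g+2}^{m_{2g+2}} in P equals C · x_1^{k_1} ⋯ x_{2g+2}^{k_{2g+2}} y^{k−1} plus an element of the additive subgroup of R generated by the products x_1^{K_1} ⋯ x_{2g+2}^{K_{2g+2}} y^{l} with K_1 + ⋯ + K_{2g+2} + l = g + 1 and l ≥ k. -/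
open Finset MvPolynomial

lemma prod_X_pow_eq_monomial' {σ R : Type*} [Fintype σ] [DecidableEq σ] [CommSemiring R] (e : σ → ℕ) :
    (∏ i, (MvPolynomial.X i : MvPolynomial σ R) ^ e i) =
      MvPolynomial.monomial (Finsupp.equivFunOnFinite.symm e) 1 := by
  rw [← MvPolynomial.prod_X_pow_eq_monomial]
  refine (Finset.prod_subset (Finset.subset_univ _) ?_).symm
  intro i _ hi
  have : e i = 0 := by
    exact Finsupp.notMem_support_iff.mp hi
  simp [this]

lemma expand_pow {R : Type*} [CommRing R] {n : ℕ} (N : ℕ) (x : Fin n → R) (y : R) :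
    ((∑ i, (MvPolynomial.X i) ^ 2 * MvPolynomial.C (x i) +
        (∑ i, MvPolynomial.X i) ^ 2 * MvPolynomial.C y) ^ N : MvPolynomial (Fin n) R)
    = ∑ d ∈ Finset.piAntidiag Finset.univ N,
        ∑ c ∈ Finset.piAntidiag (Finset.univ : Finset (Fin n)) (2 * d none),
          (Nat.multinomial Finset.univ d * Nat.multinomial Finset.univ c) •
            MvPolynomial.monomial
              (Finsupp.equivFunOnFinite.symm fun i => 2 * d (some i) + c i)
              ((∏ i, x i ^ d (some i)) * y ^ d none) := by
  classical
  set S : MvPolynomial (Fin n) R := ∑ i, MvPolynomial.X i with hS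
  set F : Option (Fin n) → MvPolynomial (Fin n) R :=
    fun j => Option.elim j (S ^ 2 * MvPolynomial.C y) (fun i => (MvPolynomial.X i) ^ 2 * MvPolynomial.C (x i)) with hF
  have hbase : (∑ i, (MvPolynomial.X i) ^ 2 * MvPolynomial.C (x i) +
      S ^ 2 * MvPolynomial.C y) = ∑ j : Option (Fin n), F j := by
    rw [Fintype.sum_option]
    simp [hF, add_comm]
  rw [hbase, Finset.sum_pow_eq_sum_piAntidiag]
  refine Finset.sum_congr rfl fun d hd => ?_
  rw [Fintype.prod_option]
  have h1 : F none ^ d none =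
      (∑ c ∈ Finset.piAntidiag (Finset.univ : Finset (Fin n)) (2 * d none),
        (Nat.multinomial Finset.univ c : MvPolynomial (Fin n) R) * ∏ i, MvPolynomial.X i ^ c i)
        * MvPolynomial.C (y ^ d none) := by
    show (S ^ 2 * MvPolynomial.C y) ^ d none = _
    rw [mul_pow, ← pow_mul, ← MvPolynomial.C_pow, hS, Finset.sum_pow_eq_sum_piAntidiag]
  have h2 : (∏ i, F (some i) ^ d (some i)) =
      (∏ i, MvPolynomial.X i ^ (2 * d (some i))) * MvPolynomial.C (∏ i, x i ^ d (some i)) := by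
    have : ∀ i : Fin n, F (some i) ^ d (some i) =
        MvPolynomial.X i ^ (2 * d (some i)) * MvPolynomial.C (x i ^ d (some i)) := by
      intro i
      show ((MvPolynomial.X i) ^ 2 * MvPolynomial.C (x i)) ^ d (some i) = _
      rw [mul_pow, ← pow_mul, ← MvPolynomial.C_pow]
    rw [Finset.prod_congr rfl fun i _ => this i, Finset.prod_mul_distrib, ← map_prod]
  rw [h1, h2, Finset.sum_mul, Finset.sum_mul, Finset.mul_sum]
  refine Finset.sum_congr rfl fun c hc => ?_
  have h3 : (∏ i, (MvPolynomial.X i : MvPolynomial (Fin n) R) ^ (2 * d (some i))) *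
      (∏ i, (MvPolynomial.X i : MvPolynomial (Fin n) R) ^ c i) =
      MvPolynomial.monomial (Finsupp.equivFunOnFinite.symm fun i => 2 * d (some i) + c i) 1 := by
    rw [← prod_X_pow_eq_monomial', ← Finset.prod_mul_distrib]
    exact Finset.prod_congr rfl fun i _ => by rw [← pow_add]
  have h4 : MvPolynomial.monomial
      (Finsupp.equivFunOnFinite.symm fun i => 2 * d (some i) + c i)
      ((∏ i, x i ^ d (some i)) * y ^ d none) =
      (MvPolynomial.monomial (Finsupp.equivFunOnFinite.symm fun i => 2 * d (some i) + c i) 1)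
        * MvPolynomial.C ((∏ i, x i ^ d (some i)) * y ^ d none) := by
    rw [MvPolynomial.C_apply, MvPolynomial.monomial_mul, add_zero, one_mul]
  rw [nsmul_eq_mul, h4, ← h3, MvPolynomial.C_mul]
  push_cast
  ring

lemma card_filter_rank_le {α : Type*} [Fintype α] [LinearOrder α] (I : Finset α) (t : ℕ)
    (ht : t ≤ I.card) :
    (I.filter fun i => (I.filter fun i' => i' ≤ i).card ≤ t).card = t := by
  set c := I.card with hc
  let e := I.orderIsoOfFin hc.symm
  have key : ∀ j : Fin c, (I.filter fun i' => i' ≤ (e j : α)).card = (j : ℕ) + 1 := by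
    intro j
    have : (I.filter fun i' => i' ≤ (e j : α)) = (Finset.Iic j).image (fun j' => (e j' : α)) := by
      ext i
      simp only [Finset.mem_filter, Finset.mem_image, Finset.mem_Iic]
      constructor
      · rintro ⟨hiI, hle⟩
        refine ⟨e.symm ⟨i, hiI⟩, ?_, by simp⟩
        have := e.symm.monotone (a := (⟨i, hiI⟩ : I)) (b := e j) (by exact_mod_cast hle)
        simpa using this
      · rintro ⟨j', hj', rfl⟩
        exact ⟨(e j').2, by exact_mod_cast e.monotone hj'⟩
    rw [this, Finset.card_image_of_injective _ (fun a b hab => e.injective (Subtype.ext hab)),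
      Fin.card_Iic]
  have himg : (I.filter fun i => (I.filter fun i' => i' ≤ i).card ≤ t) =
      ((Finset.univ.filter fun j : Fin c => (j : ℕ) < t).image (fun j => (e j : α))) := by
    ext i
    simp only [Finset.mem_filter, Finset.mem_image, Finset.mem_univ, true_and]
    constructor
    · rintro ⟨hiI, hle⟩
      refine ⟨e.symm ⟨i, hiI⟩, ?_, by simp⟩
      have := key (e.symm ⟨i, hiI⟩)
      simp only [OrderIso.apply_symm_apply] at this
      omega
    · rintro ⟨j, hj, rfl⟩
      refine ⟨(e j).2, ?_⟩
      rw [key]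
      omega
  rw [himg, Finset.card_image_of_injective _ (fun a b hab => e.injective (Subtype.ext hab))]
  have : (Finset.univ.filter fun j : Fin c => (j : ℕ) < t).card = t := by
    apply Finset.card_eq_of_bijective (fun i hi => ⟨i, lt_of_lt_of_le hi ht⟩)
    · intro a ha
      simp only [Finset.mem_filter] at ha
      exact ⟨a, ha.2, by simp⟩
    · intro i hi; simp [hi]
    · intro i j hi hj hij
      simpa using congrArg Fin.val hij
  exact this

lemma coeff_expand {R : Type*} [CommRing R] {n : ℕ} (N : ℕ) (x : Fin n → R) (y : R)
    (m : Fin n → ℕ) :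
    MvPolynomial.coeff (Finsupp.equivFunOnFinite.symm m)
      ((∑ i, (MvPolynomial.X i) ^ 2 * MvPolynomial.C (x i) +
        (∑ i, MvPolynomial.X i) ^ 2 * MvPolynomial.C y) ^ N)
    = ∑ d ∈ Finset.piAntidiag (Finset.univ : Finset (Option (Fin n))) N,
        ∑ c ∈ Finset.piAntidiag (Finset.univ : Finset (Fin n)) (2 * d none),
          (Nat.multinomial Finset.univ d * Nat.multinomial Finset.univ c) •
            (if ∀ i, 2 * d (some i) + c i = m i then (∏ i, x i ^ d (some i)) * y ^ d none
              else 0) := by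
  classical
  rw [expand_pow, MvPolynomial.coeff_sum]
  refine Finset.sum_congr rfl fun d hd => ?_
  rw [MvPolynomial.coeff_sum]
  refine Finset.sum_congr rfl fun c hc => ?_
  rw [MvPolynomial.coeff_smul, MvPolynomial.coeff_monomial]
  congr 1
  by_cases hcond : ∀ i, 2 * d (some i) + c i = m i
  · rw [if_pos (congrArg _ (funext hcond)), if_pos hcond]
  · rw [if_neg, if_neg hcond]
    intro h
    exact hcond fun i =>
      congrFun (Finsupp.equivFunOnFinite.symm.injective h) i

theorem inductive_step_coefficient
    (g k : ℕ) (hk1 : 1 ≤ k) (hk2 : k ≤ g + 1)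
    (K : Fin (2 * g + 2) → ℕ) (hK : (∑ i, K i) = g + 1 - (k - 1)) :
    ∃ C : ℕ, 0 < C ∧
      ∀ (R : Type) [inst : CommRing R] (x : Fin (2 * g + 2) → R) (y : R),
        ∃ z ∈ AddSubgroup.closure {r : R | ∃ (L : Fin (2 * g + 2) → ℕ) (l : ℕ),
            (∑ i, L i) + l = g + 1 ∧ k ≤ l ∧ r = (∏ i, x i ^ L i) * y ^ l},
          MvPolynomial.coeff
            (Finsupp.equivFunOnFinite.symm fun i : Fin (2 * g + 2) =>
              if K i = 0 then
                (if ((Finset.univ.filter fun i' => K i' = 0).filter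
                      fun i' => i' ≤ i).card ≤ 2 * (k - 1) then 1 else 0)
              else 2 * K i)
            ((∑ i, (MvPolynomial.X i) ^ 2 * MvPolynomial.C (x i) +
              (∑ i, MvPolynomial.X i) ^ 2 * MvPolynomial.C y) ^ (g + 1))
          = C • ((∏ i, x i ^ K i) * y ^ (k - 1)) + z := by
  classical
  have hsum : (∑ i, K i) + (k - 1) = g + 1 := by omega
  set t := 2 * (k - 1) with ht
  set I : Finset (Fin (2 * g + 2)) := Finset.univ.filter (fun i => K i = 0) with hI
  set O : Finset (Fin (2 * g + 2)) :=
    I.filter (fun i => (I.filter fun i' => i' ≤ i).card ≤ t) with hO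
  have hcard_nonzero : (Finset.univ.filter fun i : Fin (2 * g + 2) => ¬ K i = 0).card ≤ ∑ i, K i := by
    calc (Finset.univ.filter fun i : Fin (2 * g + 2) => ¬ K i = 0).card
        = ∑ i ∈ Finset.univ.filter (fun i : Fin (2 * g + 2) => ¬ K i = 0), 1 := by
          rw [Finset.card_eq_sum_ones]
      _ ≤ ∑ i ∈ Finset.univ.filter (fun i : Fin (2 * g + 2) => ¬ K i = 0), K i :=
          Finset.sum_le_sum (fun i hi => by
            simp only [Finset.mem_filter] at hi; omega)
      _ ≤ ∑ i, K i := Finset.sum_le_sum_of_subset (Finset.filter_subset _ _)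
  have hIcard : t ≤ I.card := by
    have h1 := Finset.card_filter_add_card_filter_not
      (s := (Finset.univ : Finset (Fin (2 * g + 2)))) (p := fun i => K i = 0)
    have hu : (Finset.univ : Finset (Fin (2 * g + 2))).card = 2 * g + 2 := by simp
    rw [hu] at h1
    have h2 : I.card = (Finset.univ.filter fun i : Fin (2 * g + 2) => K i = 0).card := by rw [hI]
    omega
  have hOcard : O.card = t := card_filter_rank_le I t hIcard
  have hOK : ∀ i ∈ O, K i = 0 := by
    intro i hi
    have := (Finset.mem_filter.mp hi).1
    rw [hI, Finset.mem_filter] at this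
    exact this.2
  set mf : Fin (2 * g + 2) → ℕ := fun i => if i ∈ O then 1 else 2 * K i with hmf
  have hgoalfun : (fun i : Fin (2 * g + 2) =>
      if K i = 0 then (if (I.filter fun i' => i' ≤ i).card ≤ t then 1 else 0)
      else 2 * K i) = mf := by
    funext i
    rw [hmf]
    by_cases h0 : K i = 0 <;> by_cases h1 : (I.filter fun i' => i' ≤ i).card ≤ t <;>
      simp [hO, hI, Finset.mem_filter, h0, h1]
  set dK : Option (Fin (2 * g + 2)) → ℕ := fun j => Option.elim j (k - 1) K with hdK
  set cO : Fin (2 * g + 2) → ℕ := fun i => if i ∈ O then 1 else 0 with hcO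
  have hcOsum : ∑ i, cO i = t := by
    rw [hcO]
    rw [Finset.sum_ite_mem, Finset.univ_inter, Finset.sum_const, smul_eq_mul, mul_one, hOcard]
  refine ⟨Nat.multinomial Finset.univ dK * Nat.multinomial Finset.univ cO,
    Nat.mul_pos (Nat.multinomial_pos _ _) (Nat.multinomial_pos _ _), ?_⟩
  intro R _ x y
  have main : ∀ d : Option (Fin (2 * g + 2)) → ℕ, ∀ c : Fin (2 * g + 2) → ℕ,
      (∑ j, d j) = g + 1 → (∑ i, c i) = 2 * d none → ¬ k ≤ d none →
      (∀ i, 2 * d (some i) + c i = mf i) → d = dK ∧ c = cO := by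
    intro d c hd hc hdn hm
    have hO1 : ∀ i ∈ O, d (some i) = 0 ∧ c i = 1 := by
      intro i hi
      have h := hm i
      rw [hmf] at h
      simp only [hi, if_pos] at h
      omega
    have hOsum : ∑ i ∈ O, c i = t := by
      rw [Finset.sum_congr rfl (fun i hi => (hO1 i hi).2), Finset.sum_const, smul_eq_mul,
        mul_one, hOcard]
    have hsplit : ∑ i ∈ Finset.univ \ O, c i + ∑ i ∈ O, c i = ∑ i, c i :=
      Finset.sum_sdiff (Finset.subset_univ O)
    have hrest0 : ∑ i ∈ Finset.univ \ O, c i = 0 ∧ d none = k - 1 := by omega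
    have hrest : ∀ i, i ∉ O → c i = 0 := by
      intro i hi
      have := (Finset.sum_eq_zero_iff.mp hrest0.1) i (by simp [hi])
      exact this
    constructor
    · funext j
      cases j with
      | none => simpa [hdK] using hrest0.2
      | some i =>
        by_cases hi : i ∈ O
        · have h1 := (hO1 i hi).1
          simp [hdK, h1, hOK i hi]
        · have h1 := hm i
          have h2 : c i = 0 := hrest i hi
          rw [hmf] at h1
          simp only [hi, if_neg, if_false] at h1
          simp only [hdK, Option.elim]
          omega
    · funext i
      by_cases hi : i ∈ O
      · simp [hcO, hi, (hO1 i hi).2]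
      · simp [hcO, hi, hrest i hi]
  -- the value of dK/cO term
  have hdKsum : (∑ j, dK j) = g + 1 := by
    rw [Fintype.sum_option]
    simp only [hdK, Option.elim]
    omega
  have hdKmem : dK ∈ (Finset.piAntidiag (Finset.univ : Finset (Option (Fin (2 * g + 2))))
      (g + 1)).filter (fun d => ¬ k ≤ d none) := by
    rw [Finset.mem_filter, Finset.mem_piAntidiag]
    refine ⟨⟨hdKsum, fun j _ => Finset.mem_univ j⟩, ?_⟩
    simp only [hdK, Option.elim]
    omega
  have hcOmem : cO ∈ Finset.piAntidiag (Finset.univ : Finset (Fin (2 * g + 2))) (2 * dK none) := by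
    rw [Finset.mem_piAntidiag]
    exact ⟨by rw [hcOsum]; simp [hdK, ht], fun i _ => Finset.mem_univ i⟩
  refine ⟨∑ d ∈ (Finset.piAntidiag (Finset.univ : Finset (Option (Fin (2 * g + 2))))
        (g + 1)).filter (fun d => k ≤ d none),
      ∑ c ∈ Finset.piAntidiag (Finset.univ : Finset (Fin (2 * g + 2))) (2 * d none),
        (Nat.multinomial Finset.univ d * Nat.multinomial Finset.univ c) •
          (if (∀ i, 2 * d (some i) + c i = mf i) then (∏ i, x i ^ d (some i)) * y ^ d none
            else 0), ?_, ?_⟩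
  · refine AddSubgroup.sum_mem _ fun d hd => AddSubgroup.sum_mem _ fun c hc => ?_
    by_cases hcond : ∀ i, 2 * d (some i) + c i = mf i
    · rw [if_pos hcond]
      refine AddSubgroup.nsmul_mem _ (AddSubgroup.subset_closure ?_) _
      refine ⟨fun i => d (some i), d none, ?_, ?_, rfl⟩
      · show (∑ i, d (some i)) + d none = g + 1
        rw [Finset.mem_filter, Finset.mem_piAntidiag] at hd
        have := hd.1.1
        rw [Fintype.sum_option] at this
        omega
      · exact (Finset.mem_filter.mp hd).2
    · rw [if_neg hcond, smul_zero]
      exact AddSubgroup.zero_mem _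
  · rw [hgoalfun, coeff_expand (g + 1) x y mf]
    rw [← Finset.sum_filter_add_sum_filter_not (Finset.piAntidiag Finset.univ (g + 1))
      (fun d => k ≤ d none)]
    rw [add_comm]
    congr 1
    rw [Finset.sum_eq_single_of_mem dK hdKmem]
    · rw [Finset.sum_eq_single_of_mem cO hcOmem]
      · rw [if_pos]
        · simp only [hdK, Option.elim]
        · intro i
          by_cases hi : i ∈ O
          · simp [hdK, hcO, hmf, hi, hOK i hi]
          · simp [hdK, hcO, hmf, hi]
      · intro c hc hne
        rw [if_neg, smul_zero]
        intro hcond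
        rw [Finset.mem_piAntidiag] at hc
        have hmem := Finset.mem_filter.mp hdKmem
        rw [Finset.mem_piAntidiag] at hmem
        exact hne (main dK c hdKsum hc.1 hmem.2 hcond).2
    · intro d hd hne
      refine Finset.sum_eq_zero fun c hc => ?_
      rw [if_neg, smul_zero]
      intro hcond
      rw [Finset.mem_filter, Finset.mem_piAntidiag] at hd
      rw [Finset.mem_piAntidiag] at hc
      exact hne (main d c hd.1.1 hc.1 hd.2 hcond).1
end
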